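/- Suppose δ = N/(λθ) and λθ < Nμ. If R = a + ib satisfies the characteristic equation -R - (λθ/N)e^{-RΔ}(1 + δR) - μ = 0 for some Δ > 0, then a < 0. -/

import Mathlib

open Real Complex

theorem edge_case_negative_real_part
    (lam mu th dlt Del a b : ℝ) (N : ℕ) (hN : 0 < N)
    (hlam : 0 < lam) (hmu : 0 < mu) (hth : 0 < th) (hDel : 0 < Del)
    (hdlt : dlt = N / (lam * th)) (hlt : lam * th < N * mu)
    (R : ℂ) (hR : R = (a : ℂ) + (b : ℂ) * Complex.I)
    (hchar : -R - ((lam * th / N : ℝ) : ℂ) *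
        (Complex.exp (-R * (Del : ℂ)) * (1 + (dlt : ℂ) * R))
        - (mu : ℂ) = 0) :
    a < 0 := by
  by_contra h
  push_neg at h
  have hNpos : (0:ℝ) < N := Nat.cast_pos.mpr hN
  set c : ℝ := lam * th / N with hc
  have hc0 : 0 < c := by positivity
  have hcmu : c < mu := by
    rw [hc, div_lt_iff₀ hNpos]; linarith
  have hcd : (c : ℂ) * (dlt : ℂ) = 1 := by
    have hr : c * dlt = 1 := by
      rw [hdlt, hc]; field_simp
    exact_mod_cast hr
  have key : Complex.exp (-R * Del) * ((c:ℂ) + R) = -(R + mu) := by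
    have h1 : (c:ℂ) * (1 + (dlt:ℂ) * R) = (c:ℂ) + R := by
      linear_combination R * hcd
    calc Complex.exp (-R*Del) * ((c:ℂ)+R)
        = (c:ℂ) * (Complex.exp (-R*Del) * (1 + (dlt:ℂ)*R)) := by rw [← h1]; ring
      _ = -(R+mu) := by linear_combination -hchar
  have hre : (-R * (Del:ℂ)).re = -a * Del := by
    simp [hR, Complex.mul_re]
  have habs : Real.exp (-a * Del) * ‖(c:ℂ) + R‖ = ‖R + (mu:ℂ)‖ := by
    have h2 := congrArg (‖·‖) key
    rwa [norm_mul, Complex.norm_exp, hre, norm_neg] at h2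
  set X := ‖(c:ℂ) + R‖ with hX
  set Y := ‖R + (mu:ℂ)‖ with hY
  have hX0 : 0 ≤ X := norm_nonneg _
  have hY0 : 0 ≤ Y := norm_nonneg _
  have hXsq : X^2 = (c+a)^2 + b^2 := by
    rw [hX, Complex.sq_norm, Complex.normSq_apply, hR]
    simp
    ring
  have hYsq : Y^2 = (a+mu)^2 + b^2 := by
    rw [hY, Complex.sq_norm, Complex.normSq_apply, hR]
    simp
    ring
  have hexp : Real.exp (-a * Del) ≤ 1 := by
    apply Real.exp_le_one_iff.mpr
    nlinarith
  have hYX : Y ≤ X := by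
    calc Y = Real.exp (-a*Del) * X := habs.symm
      _ ≤ 1 * X := by nlinarith [Real.exp_pos (-a*Del)]
      _ = X := one_mul X
  have : X^2 < Y^2 := by rw [hXsq, hYsq]; nlinarith
  nlinarith
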